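/- In BS(1,2), for every n > 100, the element represented by w = t^n a² t^{-n} lies on the sphere of radius R = 2n+2, the element u = a t^n a² t^{-(n-1)} lies on the same sphere, d(w,u) = 2, and every path from w to u inside the ball B(R) has length greater than R − 8. Consequently BS(1,2) does not satisfy Poénaru's condition P(2) with respect to {a,a⁻¹,t,t⁻¹}. -/

import Mathlib

def bsRel (q : ℤ) : Set (FreeGroup Bool) :=
  {FreeGroup.of true * FreeGroup.of false * (FreeGroup.of true)⁻¹ *
    (FreeGroup.of false ^ q)⁻¹}

abbrev BS (q : ℤ) := PresentedGroup (bsRel q)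

def bsA (q : ℤ) : BS q := PresentedGroup.of false

def bsT (q : ℤ) : BS q := PresentedGroup.of true

def evalWord (q : ℤ) (w : List (Bool × Bool)) : BS q :=
  PresentedGroup.mk (bsRel q) (FreeGroup.mk w)

/-- `g` lies in the ball of radius `r` about the identity of `BS(1,q)`. -/
def InBall (q : ℤ) (g : BS q) (r : ℕ) : Prop :=
  ∃ v : List (Bool × Bool), evalWord q v = g ∧ v.length ≤ r

/-- `g` lies on the sphere of radius `r` about the identity of `BS(1,q)`. -/
def OnSphere (q : ℤ) (g : BS q) (r : ℕ) : Prop :=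
  InBall q g r ∧ ¬ InBall q g (r - 1)

/-- `δ` labels a path from `x` to `y` staying in the ball of radius `r`. -/
def IsPathInBall (q : ℤ) (x y : BS q) (r : ℕ) (δ : List (Bool × Bool)) : Prop :=
  x * evalWord q δ = y ∧ ∀ k : ℕ, InBall q (x * evalWord q (δ.take k)) r

/-- Poénaru's condition `P(2)` for `BS(1,q)` with respect to `{a,a⁻¹,t,t⁻¹}`:
there are a sublinear function `f` and a radius `r₀` such that any two points
of the sphere `S(r)`, `r ≥ r₀`, at distance at most 2 are joined by a path
inside `B(r)` of length at most `f(r)`. -/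
def PropertyP2 (q : ℤ) : Prop :=
  ∃ f : ℕ → ℝ,
    (∀ C : ℝ, 0 < C →
        Filter.Tendsto (fun r : ℕ => (r : ℝ) - C * f r) Filter.atTop
          Filter.atTop) ∧
    ∃ r₀ : ℕ, ∀ r : ℕ, r₀ ≤ r → ∀ x y : BS q, OnSphere q x r → OnSphere q y r →
      (∃ γ : List (Bool × Bool), γ.length ≤ 2 ∧ x * evalWord q γ = y) →
      ∃ δ : List (Bool × Bool), IsPathInBall q x y r δ ∧ (δ.length : ℝ) ≤ f r

@[ext] structure AffG where
  m : ℚ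
  k : ℤ

namespace AffG

instance : Mul AffG := ⟨fun a b => ⟨a.m + 2 ^ a.k * b.m, a.k + b.k⟩⟩
instance : One AffG := ⟨⟨0, 0⟩⟩
instance : Inv AffG := ⟨fun a => ⟨-(2 ^ (-a.k) * a.m), -a.k⟩⟩

@[simp] lemma mul_m (a b : AffG) : (a * b).m = a.m + 2 ^ a.k * b.m := rfl
@[simp] lemma mul_k (a b : AffG) : (a * b).k = a.k + b.k := rfl
@[simp] lemma one_m : (1 : AffG).m = 0 := rfl
@[simp] lemma one_k : (1 : AffG).k = 0 := rfl
@[simp] lemma inv_m (a : AffG) : (a⁻¹).m = -(2 ^ (-a.k) * a.m) := rfl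
@[simp] lemma inv_k (a : AffG) : (a⁻¹).k = -a.k := rfl

instance : Group AffG where
  mul_assoc a b c := by
    ext <;> simp [zpow_add₀ (two_ne_zero (α := ℚ))] <;> ring
  one_mul a := by ext <;> simp
  mul_one a := by ext <;> simp
  inv_mul_cancel a := by ext <;> simp

def aG : AffG := ⟨1, 0⟩
def tG : AffG := ⟨0, 1⟩

end AffG

open AffG

lemma bs_rel_holds : ∀ r ∈ bsRel 2,
    FreeGroup.lift (fun x => if x then tG else aG) r = 1 := by
  intro r hr
  rcases hr with rfl
  simp only [map_mul, map_inv, map_zpow, FreeGroup.lift_apply_of]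
  have h2 : aG ^ (2:ℤ) = ⟨2, 0⟩ := by
    rw [zpow_two]; ext <;> simp [aG] <;> norm_num
  have e : (if false = true then tG else aG) = aG := rfl
  rw [e, h2]
  ext <;> simp [aG, tG] <;> norm_num

def homΦ : BS 2 →* AffG :=
  PresentedGroup.toGroup bs_rel_holds

@[simp] lemma homΦ_A : homΦ (bsA 2) = aG := PresentedGroup.toGroup.of _
@[simp] lemma homΦ_T : homΦ (bsT 2) = tG := PresentedGroup.toGroup.of _

def letterG (p : Bool × Bool) : AffG :=
  if p.2 then (if p.1 then tG else aG) else (if p.1 then tG⁻¹ else aG⁻¹)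

def wordG (v : List (Bool × Bool)) : AffG := (v.map letterG).prod

@[simp] lemma wordG_nil : wordG [] = 1 := rfl

lemma wordG_append (v₁ v₂ : List (Bool × Bool)) :
    wordG (v₁ ++ v₂) = wordG v₁ * wordG v₂ := by
  simp [wordG]

lemma evalWord_append (v₁ v₂ : List (Bool × Bool)) :
    evalWord 2 (v₁ ++ v₂) = evalWord 2 v₁ * evalWord 2 v₂ := by
  simp [evalWord, ← FreeGroup.mul_mk, map_mul]

lemma evalWord_nil : evalWord 2 [] = 1 := by
  simp [evalWord, ← FreeGroup.one_eq_mk]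

lemma evalWord_singleton (x : Bool) (b : Bool) :
    evalWord 2 [(x, b)] = if b then PresentedGroup.of (rels := bsRel 2) x
      else (PresentedGroup.of (rels := bsRel 2) x)⁻¹ := by
  cases b
  · have : FreeGroup.mk [(x, false)] = (FreeGroup.of x)⁻¹ := by
      show FreeGroup.mk [(x, false)] = (FreeGroup.mk [(x, true)])⁻¹
      rw [FreeGroup.inv_mk]
      simp [FreeGroup.invRev]
    simp only [evalWord, this, map_inv, Bool.false_eq_true, if_false]
    rfl
  · rfl

lemma homΦ_of (x : Bool) :
    homΦ (PresentedGroup.of (rels := bsRel 2) x) = if x then tG else aG :=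
  PresentedGroup.toGroup.of _

lemma homΦ_evalWord (v : List (Bool × Bool)) :
    homΦ (evalWord 2 v) = wordG v := by
  induction v with
  | nil => rw [evalWord_nil, map_one]; rfl
  | cons x v ih =>
    have : (x :: v) = [x] ++ v := rfl
    rw [this, evalWord_append, map_mul, ih, wordG_append]
    congr 1
    obtain ⟨a, b⟩ := x
    rw [evalWord_singleton]
    cases b <;> cases a <;>
      simp [letterG, homΦ_of, wordG]

def termVal (p : ℤ × Bool) : ℚ := (if p.2 then 1 else -1) * 2 ^ p.1

def sumT (l : List (ℤ × Bool)) : ℚ := (l.map termVal).sum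

@[simp] lemma sumT_nil : sumT [] = 0 := rfl

lemma sumT_append (l₁ l₂ : List (ℤ × Bool)) : sumT (l₁ ++ l₂) = sumT l₁ + sumT l₂ := by
  simp [sumT]

lemma two_zpow_pos (c : ℤ) : (0:ℚ) < 2 ^ c := zpow_pos (by norm_num) c

lemma abs_termVal (p : ℤ × Bool) : |termVal p| = 2 ^ p.1 := by
  rcases p with ⟨c, b⟩
  cases b <;> simp [termVal, abs_of_pos, two_zpow_pos c] <;>
    rw [abs_of_pos (two_zpow_pos c)]

lemma two_zpow_int {c : ℤ} (hc : 0 ≤ c) : ∃ z : ℤ, (2:ℚ) ^ c = (z:ℚ) :=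
  ⟨2 ^ c.toNat, by
    rw [show ((2 ^ c.toNat : ℤ) : ℚ) = (2:ℚ) ^ c.toNat by push_cast; ring,
      ← zpow_natCast, Int.toNat_of_nonneg hc]⟩

lemma two_zpow_le_one {c : ℤ} (hc : c ≤ 0) : (2:ℚ) ^ c ≤ 1 := by
  calc (2:ℚ) ^ c ≤ 2 ^ (0:ℤ) := by
        apply zpow_le_zpow_right₀ (by norm_num) hc
    _ = 1 := by norm_num

lemma two_zpow_le {c : ℤ} {U : ℕ} (hc : c ≤ (U:ℤ)) : (2:ℚ) ^ c ≤ 2 ^ U := by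
  calc (2:ℚ) ^ c ≤ 2 ^ (U:ℤ) := by
        apply zpow_le_zpow_right₀ (by norm_num) hc
    _ = 2 ^ U := by rw [zpow_natCast]

lemma sumT_even (l : List (ℤ × Bool)) (h : ∀ p ∈ l, 1 ≤ p.1) :
    ∃ z : ℤ, sumT l = 2 * (z:ℚ) := by
  induction l with
  | nil => exact ⟨0, by simp⟩
  | cons p l ih =>
    obtain ⟨z, hz⟩ := ih (fun q hq => h q (List.mem_cons_of_mem _ hq))
    have hp : 1 ≤ p.1 := h p List.mem_cons_self
    obtain ⟨y, hy⟩ := two_zpow_int (c := p.1 - 1) (by omega)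
    have h2 : (2:ℚ) ^ p.1 = 2 * (y:ℚ) := by
      rw [← hy, show p.1 = 1 + (p.1 - 1) by ring, zpow_add₀ (two_ne_zero) 1 (p.1 - 1)]
      norm_num
    rcases p with ⟨c, b⟩
    cases b
    · exact ⟨-y + z, by simp only [sumT, List.map_cons, List.sum_cons, termVal] at *
                        push_cast; rw [hz, h2]; ring⟩
    · exact ⟨y + z, by simp only [sumT, List.map_cons, List.sum_cons, termVal] at *
                       push_cast; rw [hz, h2]; ring⟩

lemma sumT_abs_le (l : List (ℤ × Bool)) (U : ℕ) (h : ∀ p ∈ l, p.1 ≤ (U:ℤ)) :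
    |sumT l| ≤ (l.length : ℚ) * 2 ^ U := by
  induction l with
  | nil => simp
  | cons p l ih =>
    have h1 := ih (fun q hq => h q (List.mem_cons_of_mem _ hq))
    have h2 : |termVal p| ≤ 2 ^ U := by
      rw [abs_termVal]; exact two_zpow_le (h p List.mem_cons_self)
    have : sumT (p :: l) = termVal p + sumT l := by simp [sumT]
    rw [this]
    calc |termVal p + sumT l| ≤ |termVal p| + |sumT l| := abs_add_le _ _
      _ ≤ 2 ^ U + (l.length : ℚ) * 2 ^ U := by linarith
      _ = ((p :: l).length : ℚ) * 2 ^ U := by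
            simp only [List.length_cons]; push_cast; ring

lemma sumT_abs_le' (l : List (ℤ × Bool)) (U : ℕ) (h : ∀ p ∈ l, p.1 ≤ (U:ℤ))
    (h0 : ∃ p ∈ l, p.1 ≤ 0) :
    |sumT l| ≤ ((l.length : ℚ) - 1) * 2 ^ U + 1 := by
  obtain ⟨p, hp, hp0⟩ := h0
  obtain ⟨s, t, rfl⟩ := List.append_of_mem hp
  have hs := sumT_abs_le s U (fun q hq => h q (by simp [hq]))
  have ht := sumT_abs_le t U (fun q hq => h q (by simp [hq]))
  have hterm : |termVal p| ≤ 1 := by rw [abs_termVal]; exact two_zpow_le_one hp0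
  have hsum : sumT (s ++ p :: t) = sumT s + termVal p + sumT t := by
    rw [sumT_append]; simp [sumT]; ring
  have hlen : ((s ++ p :: t).length : ℚ) = (s.length : ℚ) + (t.length : ℚ) + 1 := by
    simp; push_cast; ring
  rw [hsum, hlen]
  have h2U : (0:ℚ) < 2 ^ U := by positivity
  calc |sumT s + termVal p + sumT t| ≤ |sumT s| + |termVal p| + |sumT t| := (abs_add_le _ _).trans (by gcongr; exact abs_add_le _ _)
    _ ≤ (s.length : ℚ) * 2 ^ U + 1 + (t.length : ℚ) * 2 ^ U := by linarith
    _ ≤ ((s.length : ℚ) + (t.length : ℚ) + 1 - 1) * 2 ^ U + 1 := by ring_nf; linarith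

lemma wordG_singleton (x : Bool × Bool) : wordG [x] = letterG x := by
  simp [wordG]

lemma word_decomp (v : List (Bool × Bool)) :
    ∃ (l : List (ℤ × Bool)) (U Dn : ℕ),
      (wordG v).m = sumT l ∧ (wordG v).k = (U:ℤ) - Dn ∧
      l.length + U + Dn ≤ v.length ∧
      ∀ p ∈ l, p.1 ≤ (U:ℤ) ∧ -(Dn:ℤ) ≤ p.1 := by
  induction v using List.reverseRecOn with
  | nil => exact ⟨[], 0, 0, by simp, by simp, by simp, by simp⟩
  | append_singleton v x ih =>
    obtain ⟨l, U, Dn, hm, hk, hlen, hbd⟩ := ih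
    rw [wordG_append, wordG_singleton]
    rcases x with ⟨x1, x2⟩
    cases x1
    · -- a-letter
      refine ⟨l ++ [((wordG v).k, x2)], U, Dn, ?_, ?_, ?_, ?_⟩
      · have e : sumT (l ++ [((wordG v).k, x2)]) = sumT l + termVal ((wordG v).k, x2) := by
          rw [sumT_append]; simp [sumT]
        rw [e, ← hm]
        cases x2 <;> simp [letterG, aG, termVal] <;> ring
      · cases x2 <;> simp [letterG, aG, hk]
      · simp at hlen ⊢; omega
      · intro p hp
        rcases List.mem_append.1 hp with h | h
        · exact hbd p h
        · simp only [List.mem_singleton] at h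
          subst h
          simp only [hk]
          constructor <;> omega
    · -- t-letter
      cases x2
      · refine ⟨l, U, Dn + 1, ?_, ?_, ?_, ?_⟩
        · rw [← hm]; simp [letterG, tG]
        · simp [letterG, tG, hk]; push_cast; ring
        · simp at hlen ⊢; omega
        · intro p hp
          obtain ⟨h1, h2⟩ := hbd p hp
          refine ⟨h1, ?_⟩
          push_cast; omega
      · refine ⟨l, U + 1, Dn, ?_, ?_, ?_, ?_⟩
        · rw [← hm]; simp [letterG, tG]
        · simp [letterG, tG, hk]; push_cast; ring
        · simp at hlen ⊢; omega
        · intro p hp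
          obtain ⟨h1, h2⟩ := hbd p hp
          refine ⟨?_, h2⟩
          push_cast; omega

lemma key_pow (j : ℕ) : (2*j+3 : ℚ) ≤ 3 * 2 ^ j := by
  induction j with
  | zero => norm_num
  | succ j ih =>
    have h1 : (1:ℚ) ≤ 2 ^ j := one_le_pow₀ (by norm_num)
    rw [pow_succ]
    push_cast at ih ⊢
    nlinarith

lemma key_pow2 (j : ℕ) : (j+1 : ℚ) ≤ 2 ^ j := by
  induction j with
  | zero => norm_num
  | succ j ih =>
    have h1 : (1:ℚ) ≤ 2 ^ j := one_le_pow₀ (by norm_num)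
    rw [pow_succ]
    push_cast at ih ⊢
    nlinarith

lemma Lq1 (a M : ℕ) (ha : 1 ≤ a) : ((2*a+1:ℚ) - 2*M) * 2 ^ M ≤ 3 * 2 ^ (a-1) := by
  rcases le_or_gt M (a-1) with h | h
  · obtain ⟨j, hj⟩ : ∃ j, a - 1 = M + j := ⟨a - 1 - M, by omega⟩
    have hc : ((2*a+1:ℚ) - 2*M) = 2*j+3 := by
      have : a = M + j + 1 := by omega
      subst this; push_cast; ring
    rw [hc, hj, pow_add]
    have h2 : (0:ℚ) < 2 ^ M := by positivity
    nlinarith [key_pow j]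
  · have h2M : (2:ℚ) ^ M ≤ 2 ^ M := le_refl _
    rcases le_or_gt ((2*a+1:ℚ) - 2*M) 0 with h0 | h0
    · have : (0:ℚ) ≤ 3 * 2 ^ (a-1) := by positivity
      nlinarith [pow_pos (show (0:ℚ) < 2 by norm_num) M]
    · -- M ≥ a, 2a+1-2M > 0 impossible unless M = a (gives value 1)
      have hMa : M = a := by
        by_contra hne
        have : a + 1 ≤ M := by omega
        have : (M:ℚ) ≥ a + 1 := by exact_mod_cast this
        nlinarith
      subst hMa
      have : ((2*M+1:ℚ) - 2*M) = 1 := by ring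
      rw [this, one_mul]
      have : (2:ℚ) ^ M = 2 * 2 ^ (M-1) := by
        rw [← pow_succ']
        congr 1; omega
      rw [this]
      have : (0:ℚ) < 2 ^ (M-1) := by positivity
      nlinarith

lemma Lq2 (a M : ℕ) : ((2*a+2:ℚ) - 2*M) * 2 ^ M ≤ 2 ^ (a+1) := by
  rcases le_or_gt M a with h | h
  · obtain ⟨j, hj⟩ : ∃ j, a = M + j := ⟨a - M, by omega⟩
    have hc : ((2*a+2:ℚ) - 2*M) = 2*j+2 := by subst hj; push_cast; ring
    rw [hc, hj]
    have hkey : (j+1:ℚ) ≤ 2 ^ j := key_pow2 j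
    have h2 : (0:ℚ) < 2 ^ M := by positivity
    calc (2*(j:ℚ)+2) * 2 ^ M = 2 * (j+1) * 2 ^ M := by ring
      _ ≤ 2 * 2 ^ j * 2 ^ M := by nlinarith
      _ = 2 ^ (M + j + 1) := by rw [pow_add, pow_succ]; ring
      _ = 2 ^ (M + j + 1) := rfl
  · have h0 : ((2*a+2:ℚ) - 2*M) ≤ 0 := by
      have : (a:ℚ) + 1 ≤ M := by exact_mod_cast h
      nlinarith
    nlinarith [pow_pos (show (0:ℚ) < 2 by norm_num) M,
      pow_pos (show (0:ℚ) < 2 by norm_num) (a+1)]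

lemma tG_pow (j : ℕ) : tG ^ j = ⟨0, j⟩ := by
  induction j with
  | zero => rfl
  | succ j ih => rw [pow_succ, ih]; ext <;> simp [tG] <;> push_cast <;> ring

lemma tG_inv_pow (j : ℕ) : (tG⁻¹) ^ j = ⟨0, -(j:ℤ)⟩ := by
  induction j with
  | zero => rfl
  | succ j ih => rw [pow_succ, ih]; ext <;> simp [tG] <;> push_cast <;> ring

lemma aG_sq : aG ^ 2 = ⟨2, 0⟩ := by
  rw [pow_two]; ext <;> simp [aG] <;> norm_num

lemma homΦ_w (n : ℕ) :
    homΦ (bsT 2 ^ n * bsA 2 ^ 2 * ((bsT 2)⁻¹) ^ n) = ⟨2^(n+1), 0⟩ := by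
  have hT : homΦ (bsT 2) = tG := homΦ_of true
  have hA : homΦ (bsA 2) = aG := homΦ_of false
  simp only [map_mul, map_pow, map_inv, hT, hA]
  rw [tG_pow, tG_inv_pow, aG_sq]
  ext <;> simp
  rw [pow_succ]

lemma homΦ_u (n : ℕ) (hn : 1 ≤ n) :
    homΦ (bsA 2 * bsT 2 ^ n * bsA 2 ^ 2 * ((bsT 2)⁻¹) ^ (n-1)) = ⟨2^(n+1)+1, 1⟩ := by
  have hT : homΦ (bsT 2) = tG := homΦ_of true
  have hA : homΦ (bsA 2) = aG := homΦ_of false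
  simp only [map_mul, map_pow, map_inv, hT, hA]
  rw [tG_pow, tG_inv_pow, aG_sq]
  ext <;> simp [aG]
  · rw [pow_succ]; ring
  · push_cast [Nat.cast_sub hn]; ring

lemma wordG_of_eval {g : BS 2} {v : List (Bool × Bool)} (hv : evalWord 2 v = g) :
    wordG v = homΦ g := by
  rw [← hv, homΦ_evalWord]

lemma four_gt_three (n : ℕ) (hn : 1 ≤ n) :
    (3:ℚ) * 2 ^ (n-1) < 2 ^ (n+1) := by
  have h : (2:ℚ)^(n+1) = 4 * 2^(n-1) := by
    rw [show n + 1 = (n-1) + 2 by omega, pow_add]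
    ring
  rw [h]
  have : (0:ℚ) < 2 ^ (n-1) := by positivity
  nlinarith

lemma main_bound {n U : ℕ} {l : List (ℤ × Bool)} (L : ℚ)
    (hL : (l.length : ℚ) ≤ L) (hLval : L ≤ (2*n+1:ℚ) - 2*U) (hn : 1 ≤ n)
    (hbd : ∀ p ∈ l, p.1 ≤ (U:ℤ)) :
    |sumT l| ≤ 3 * 2 ^ (n-1) := by
  have h2U : (0:ℚ) < 2 ^ U := by positivity
  calc |sumT l| ≤ (l.length : ℚ) * 2 ^ U := sumT_abs_le l U hbd
    _ ≤ ((2*n+1:ℚ) - 2*U) * 2 ^ U := by nlinarith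
    _ ≤ 3 * 2 ^ (n-1) := Lq1 n U hn

lemma not_inBall_w (n : ℕ) (hn : 1 ≤ n) :
    ¬ InBall 2 (bsT 2 ^ n * bsA 2 ^ 2 * ((bsT 2)⁻¹) ^ n) (2*n+1) := by
  rintro ⟨v, hv, hlen⟩
  have hw : wordG v = ⟨2^(n+1), 0⟩ := by rw [wordG_of_eval hv, homΦ_w]
  obtain ⟨l, U, Dn, hm, hk, hl, hbd⟩ := word_decomp v
  rw [hw] at hm hk
  simp only at hm hk
  have hUD : U = Dn := by omega
  have hlen2 : l.length + 2*U ≤ 2*n+1 := by omega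
  have hcast : (l.length : ℚ) ≤ (2*n+1:ℚ) - 2*U := by
    have : (l.length : ℚ) + 2*U ≤ 2*n+1 := by exact_mod_cast hlen2
    linarith
  have hb := main_bound (l.length : ℚ) (le_refl _) hcast hn (fun p hp => (hbd p hp).1)
  rw [← hm] at hb
  have : |(2:ℚ)^(n+1)| = 2^(n+1) := abs_of_pos (by positivity)
  rw [this] at hb
  exact absurd hb (not_le.2 (by linarith [four_gt_three n hn]))

lemma odd_helper (n : ℕ) : ∀ z : ℤ, ((2:ℚ)^(n+1) + 1) ≠ 2 * z := by
  intro z h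
  have h2 : ((2^(n+1) + 1 : ℤ) : ℚ) = ((2*z : ℤ) : ℚ) := by push_cast; linarith
  have h3 : (2^(n+1) + 1 : ℤ) = 2*z := Int.cast_injective h2
  have h4 : (2:ℤ)^(n+1) = 2 * 2^n := by rw [pow_succ]; ring
  omega

lemma not_inBall_u (n : ℕ) (hn : 1 ≤ n) :
    ¬ InBall 2 (bsA 2 * bsT 2 ^ n * bsA 2 ^ 2 * ((bsT 2)⁻¹) ^ (n-1)) (2*n+1) := by
  rintro ⟨v, hv, hlen⟩
  have hw : wordG v = ⟨2^(n+1)+1, 1⟩ := by rw [wordG_of_eval hv, homΦ_u n hn]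
  obtain ⟨l, U, Dn, hm, hk, hl, hbd⟩ := word_decomp v
  rw [hw] at hm hk
  simp only at hm hk
  have hUD : U = Dn + 1 := by omega
  have hsmall : ∃ p ∈ l, p.1 ≤ 0 := by
    by_contra hc
    push_neg at hc
    obtain ⟨z, hz⟩ := sumT_even l (fun p hp => by have := hc p hp; omega)
    exact odd_helper n z (by rw [hm, hz])
  have hlen2 : l.length + 2*U ≤ 2*n+2 := by omega
  have hL1 : 1 ≤ l.length := by
    obtain ⟨p, hp, _⟩ := hsmall
    exact List.length_pos_iff.2 (by rintro rfl; simp at hp)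
  have hcast : (l.length : ℚ) - 1 ≤ (2*n+1:ℚ) - 2*U := by
    have : (l.length : ℚ) + 2*U ≤ 2*n+2 := by exact_mod_cast hlen2
    linarith
  have h2U : (0:ℚ) < 2 ^ U := by positivity
  have hb : |sumT l| ≤ 3 * 2^(n-1) + 1 := by
    calc |sumT l| ≤ ((l.length : ℚ) - 1) * 2 ^ U + 1 :=
          sumT_abs_le' l U (fun p hp => (hbd p hp).1) hsmall
      _ ≤ ((2*n+1:ℚ) - 2*U) * 2 ^ U + 1 := by nlinarith
      _ ≤ 3 * 2 ^ (n-1) + 1 := by linarith [Lq1 n U hn]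
  rw [← hm] at hb
  have habs : |(2:ℚ)^(n+1) + 1| = 2^(n+1) + 1 := abs_of_pos (by positivity)
  rw [habs] at hb
  exact absurd hb (not_le.2 (by linarith [four_gt_three n hn]))

lemma bound_low (n : ℕ) (hn : 1 ≤ n) (v : List (Bool × Bool))
    (hlen : v.length ≤ 2*n+2) (hk0 : (wordG v).k ≤ 0)
    (hodd : ∀ z : ℤ, (wordG v).m ≠ 2 * z) :
    |(wordG v).m| ≤ 3 * 2 ^ (n-1) + 1 := by
  obtain ⟨l, U, Dn, hm, hk, hl, hbd⟩ := word_decomp v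
  rw [hk] at hk0
  have hUD : U ≤ Dn := by omega
  have hsmall : ∃ p ∈ l, p.1 ≤ 0 := by
    by_contra hc
    push_neg at hc
    obtain ⟨z, hz⟩ := sumT_even l (fun p hp => by have := hc p hp; omega)
    exact hodd z (by rw [hm, hz])
  have hlen2 : l.length + 2*U ≤ 2*n+2 := by omega
  have hcast : (l.length : ℚ) - 1 ≤ (2*n+1:ℚ) - 2*U := by
    have : (l.length : ℚ) + 2*U ≤ 2*n+2 := by exact_mod_cast hlen2
    linarith
  have h2U : (0:ℚ) < 2 ^ U := by positivity
  rw [hm]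
  calc |sumT l| ≤ ((l.length : ℚ) - 1) * 2 ^ U + 1 :=
        sumT_abs_le' l U (fun p hp => (hbd p hp).1) hsmall
    _ ≤ ((2*n+1:ℚ) - 2*U) * 2 ^ U + 1 := by nlinarith
    _ ≤ 3 * 2 ^ (n-1) + 1 := by linarith [Lq1 n U hn]

lemma evalWord_cons (x : Bool × Bool) (v : List (Bool × Bool)) :
    evalWord 2 (x :: v) = evalWord 2 [x] * evalWord 2 v := by
  rw [show x :: v = [x] ++ v from rfl, evalWord_append]

lemma evalWord_replicate (x : Bool × Bool) (j : ℕ) :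
    evalWord 2 (List.replicate j x) = (evalWord 2 [x]) ^ j := by
  induction j with
  | zero => simp [evalWord_nil]
  | succ j ih => rw [List.replicate_succ, evalWord_cons, ih, pow_succ']

lemma evalWord_T : evalWord 2 [(true, true)] = bsT 2 := by
  rw [evalWord_singleton]; simp [bsT]

lemma evalWord_T' : evalWord 2 [(true, false)] = (bsT 2)⁻¹ := by
  rw [evalWord_singleton]; simp [bsT]

lemma evalWord_A : evalWord 2 [(false, true)] = bsA 2 := by
  rw [evalWord_singleton]; simp [bsA]

lemma evalWord_AA : evalWord 2 [(false,true),(false,true)] = bsA 2 ^ 2 := by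
  rw [evalWord_cons, evalWord_A, ← sq]

lemma inBall_w (n : ℕ) :
    InBall 2 (bsT 2 ^ n * bsA 2 ^ 2 * ((bsT 2)⁻¹) ^ n) (2*n+2) := by
  refine ⟨List.replicate n (true,true) ++ ([(false,true),(false,true)] ++
    List.replicate n (true,false)), ?_, by
      simp only [List.length_append, List.length_cons, List.length_replicate,
        List.length_nil]
      omega⟩
  rw [evalWord_append, evalWord_append, evalWord_replicate, evalWord_replicate,
    evalWord_AA, evalWord_T, evalWord_T', ← mul_assoc]

lemma inBall_u (n : ℕ) (hn : 1 ≤ n) :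
    InBall 2 (bsA 2 * bsT 2 ^ n * bsA 2 ^ 2 * ((bsT 2)⁻¹) ^ (n-1)) (2*n+2) := by
  refine ⟨[(false,true)] ++ (List.replicate n (true,true) ++ ([(false,true),(false,true)] ++
    List.replicate (n-1) (true,false))), ?_, by
      simp only [List.length_append, List.length_cons, List.length_replicate,
        List.length_nil]
      omega⟩
  rw [evalWord_append, evalWord_append, evalWord_append, evalWord_replicate,
    evalWord_replicate, evalWord_AA, evalWord_T, evalWord_T', evalWord_A,
    ← mul_assoc, ← mul_assoc]

lemma rel_tat : bsT 2 * bsA 2 * (bsT 2)⁻¹ = bsA 2 ^ 2 := by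
  have hr : PresentedGroup.mk (bsRel 2)
      (FreeGroup.of true * FreeGroup.of false * (FreeGroup.of true)⁻¹ *
        (FreeGroup.of false ^ (2:ℤ))⁻¹) = 1 := by
    apply (QuotientGroup.eq_one_iff _).mpr
    exact Subgroup.subset_normalClosure rfl
  rw [map_mul, map_mul, map_mul, map_inv, map_inv, map_zpow] at hr
  have h1 : (PresentedGroup.mk (bsRel 2) (FreeGroup.of true)) = bsT 2 := rfl
  have h2 : (PresentedGroup.mk (bsRel 2) (FreeGroup.of false)) = bsA 2 := rfl
  rw [h1, h2] at hr
  have h3 : bsA 2 ^ (2:ℤ) = bsA 2 ^ 2 := by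
    rw [zpow_two, sq]
  rw [h3] at hr
  exact mul_inv_eq_one.1 hr

lemma conj_pow_bs (j : ℕ) : bsT 2 ^ j * bsA 2 * (bsT 2 ^ j)⁻¹ = bsA 2 ^ (2^j) := by
  induction j with
  | zero => simp
  | succ j ih =>
    have h : bsT 2 ^ (j+1) * bsA 2 * (bsT 2 ^ (j+1))⁻¹
        = bsT 2 ^ j * (bsT 2 * bsA 2 * (bsT 2)⁻¹) * (bsT 2 ^ j)⁻¹ := by
      rw [pow_succ]; group
    rw [h, rel_tat, show (2:ℕ)^(j+1) = 2^j * 2 by rw [pow_succ],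
      pow_mul, ← ih, conj_pow]

lemma w_eq (n : ℕ) :
    bsT 2 ^ n * bsA 2 ^ 2 * ((bsT 2)⁻¹) ^ n = bsA 2 ^ (2^(n+1)) := by
  rw [inv_pow, ← conj_pow, conj_pow_bs, show (2:ℕ)^(n+1) = 2^n * 2 by rw [pow_succ],
    pow_mul]

lemma gamma_eq (n : ℕ) (hn : 1 ≤ n) :
    (bsT 2 ^ n * bsA 2 ^ 2 * ((bsT 2)⁻¹) ^ n) * (bsA 2 * bsT 2)
      = bsA 2 * bsT 2 ^ n * bsA 2 ^ 2 * ((bsT 2)⁻¹) ^ (n-1) := by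
  have hinv : ((bsT 2)⁻¹) ^ (n-1) = ((bsT 2)⁻¹) ^ n * bsT 2 := by
    have h : ((bsT 2)⁻¹)^n = ((bsT 2)⁻¹)^(n-1) * (bsT 2)⁻¹ := by
      rw [← pow_succ, show n-1+1 = n by omega]
    rw [h, mul_assoc, inv_mul_cancel, mul_one]
  have hR : bsA 2 * bsT 2 ^ n * bsA 2 ^ 2 * ((bsT 2)⁻¹) ^ (n-1)
      = bsA 2 * (bsT 2 ^ n * bsA 2 ^ 2 * ((bsT 2)⁻¹) ^ n) * bsT 2 := by
    rw [hinv]; group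
  rw [hR, w_eq, ← mul_assoc, ← pow_succ, ← pow_succ']

lemma no_short (n : ℕ) (hn : 1 ≤ n) :
    ¬ ∃ γ : List (Bool × Bool), γ.length ≤ 1 ∧
      (bsT 2 ^ n * bsA 2 ^ 2 * ((bsT 2)⁻¹) ^ n) * evalWord 2 γ
        = bsA 2 * bsT 2 ^ n * bsA 2 ^ 2 * ((bsT 2)⁻¹) ^ (n-1) := by
  rintro ⟨γ, hlen, heq⟩
  have h := congrArg homΦ heq
  rw [map_mul, homΦ_w, homΦ_evalWord, homΦ_u n hn] at h
  have hpow : (0:ℚ) < 2^(n+1) := by positivity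
  rcases γ with _ | ⟨⟨x1, x2⟩, γ'⟩
  · rw [wordG_nil, mul_one] at h
    have hk := congrArg AffG.k h
    simp at hk
  · have hγ' : γ' = [] := by
      rcases γ' with _ | ⟨y, γ''⟩
      · rfl
      · simp at hlen
    subst hγ'
    rw [wordG_singleton] at h
    have hk := congrArg AffG.k h
    have hm := congrArg AffG.m h
    cases x1 <;> cases x2 <;>
      simp [letterG, aG, tG] at hk hm <;> linarith

section PathArgument

variable (n : ℕ) (δ : List (Bool × Bool))

def dflt : Bool × Bool := (false, true)

def pUp : Bool × Bool → Bool := fun x => x.1 && x.2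
def pDown : Bool × Bool → Bool := fun x => x.1 && !x.2
def pA : Bool × Bool → Bool := fun x => !x.1

lemma count_partition (v : List (Bool × Bool)) :
    v.countP pA + v.countP pUp + v.countP pDown = v.length := by
  induction v with
  | nil => simp
  | cons x v ih =>
    rcases x with ⟨b1, b2⟩
    cases b1 <;> cases b2 <;>
      simp [List.countP_cons, pA, pUp, pDown] at ih ⊢ <;> omega

lemma path_long (n : ℕ) (hn : 100 < n) (δ : List (Bool × Bool))
    (hpath : IsPathInBall 2 (bsT 2 ^ n * bsA 2 ^ 2 * ((bsT 2)⁻¹) ^ n)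
      (bsA 2 * bsT 2 ^ n * bsA 2 ^ 2 * ((bsT 2)⁻¹) ^ (n-1)) (2*n+2) δ) :
    2*n + 2 - 8 < δ.length := by
  obtain ⟨hend, hball⟩ := hpath
  set L := δ.length with hL
  set N : ℚ := 2^(n+1) with hN
  -- the path in AffG
  set Q : ℕ → AffG := fun j => (⟨N, 0⟩ : AffG) * wordG (δ.take j) with hQ
  have hQball : ∀ j : ℕ, ∃ v : List (Bool × Bool),
      wordG v = Q j ∧ v.length ≤ 2*n+2 := by
    intro j
    obtain ⟨v, hv, hvlen⟩ := hball j
    refine ⟨v, ?_, hvlen⟩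
    have := wordG_of_eval hv
    rw [map_mul, homΦ_w, homΦ_evalWord] at this
    exact this
  have hQ0 : Q 0 = ⟨N, 0⟩ := by
    simp [hQ]
  have hQL : Q L = ⟨N + 1, 1⟩ := by
    have h := congrArg homΦ hend
    rw [map_mul, homΦ_w, homΦ_evalWord, homΦ_u n (by omega)] at h
    simp only [hQ, hL, List.take_length]
    rw [h]
  have hstep : ∀ j, j < L → Q (j+1) = Q j * letterG (δ.getD j dflt) := by
    intro j hj
    have h1 : δ.take (j+1) = (δ.take j) ++ [δ.getD j dflt] := by
      rw [← List.take_concat_get hj, List.concat_eq_append]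
      congr 1
      rw [List.getD_eq_getElem δ dflt hj]
    simp only [hQ, h1, wordG_append, wordG_singleton, ← mul_assoc]
  -- k-values via counts
  have hκ : ∀ j, (Q j).k = ((δ.take j).countP pUp : ℤ) - (δ.take j).countP pDown := by
    intro j
    induction j with
    | zero => simp [hQ0]
    | succ j ih =>
      rcases le_or_gt L j with hLe | hLt
      · have h1 : δ.take (j+1) = δ.take j := by
          rw [List.take_of_length_le (by omega), List.take_of_length_le (by omega)]
        have h2 : Q (j+1) = Q j := by simp only [hQ, h1]
        rw [h2, h1, ih]
      · rw [hstep j hLt]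
        have h1 : δ.take (j+1) = (δ.take j) ++ [δ.getD j dflt] := by
          rw [← List.take_concat_get hLt, List.concat_eq_append]
          congr 1
          rw [List.getD_eq_getElem δ dflt hLt]
        rw [h1]
        rcases hx : δ.getD j dflt with ⟨b1, b2⟩
        cases b1 <;> cases b2 <;>
          simp [letterG, aG, tG, List.countP_append, pUp, pDown, ih, hx] <;> ring
  have hUCle : ∀ j, (δ.take j).countP pUp ≤ δ.countP pUp :=
    fun j => (List.take_sublist j δ).countP_le (p := pUp)
  set UC := δ.countP pUp with hUC
  have hκle : ∀ j, (Q j).k ≤ (UC : ℤ) := by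
    intro j
    rw [hκ j]
    have := hUCle j
    omega
  -- structure of m-values before the first low a-step
  have hS : ∀ i, i ≤ L →
      (∀ j, j < i → pA (δ.getD j dflt) = true → 1 ≤ (Q j).k) →
      ∃ z : ℤ, (Q i).m = N + 2*z ∧
        |(Q i).m - N| ≤ ((δ.take i).countP pA : ℚ) * 2^UC := by
    intro i
    induction i with
    | zero => exact fun _ _ => ⟨0, by simp [hQ0], by simp [hQ0]⟩
    | succ i ih =>
      intro hiL hH
      obtain ⟨z, hz, hd⟩ := ih (by omega) (fun j hj => hH j (by omega))
      have hiLt : i < L := by omega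
      have h1 : δ.take (i+1) = (δ.take i) ++ [δ.getD i dflt] := by
        rw [← List.take_concat_get hiLt, List.concat_eq_append]
        congr 1
        rw [List.getD_eq_getElem δ dflt hiLt]
      rw [hstep i hiLt, h1]
      rcases hx : δ.getD i dflt with ⟨b1, b2⟩
      cases b1
      · -- a-letter
        have hk1 : 1 ≤ (Q i).k := hH i (by omega) (by rw [hx]; rfl)
        obtain ⟨y, hy⟩ := two_zpow_int (c := (Q i).k - 1) (by omega)
        have h2 : (2:ℚ) ^ (Q i).k = 2 * (y:ℚ) := by
          rw [show (Q i).k = 1 + ((Q i).k - 1) by ring,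
            zpow_add₀ (two_ne_zero) 1 ((Q i).k - 1), hy]
          norm_num
        have hmval : ((Q i) * letterG ((false:Bool), b2)).m
            = (Q i).m + (if b2 = true then (1:ℚ) else -1) * 2 ^ (Q i).k := by
          cases b2 <;> simp [letterG, aG] <;> ring
        have hcount : (((δ.take i) ++ [((false : Bool), b2)]).countP pA : ℚ)
            = ((δ.take i).countP pA : ℚ) + 1 := by
          rw [List.countP_append]
          push_cast [List.countP_cons]
          simp [pA]
        have hκUC : (2:ℚ) ^ (Q i).k ≤ 2 ^ UC := two_zpow_le (hκle i)
        have h2UC : (0:ℚ) < 2 ^ UC := by positivity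
        refine ⟨z + (if b2 = true then y else -y), ?_, ?_⟩
        · rw [hmval, hz, h2]
          cases b2 <;> simp <;> push_cast <;> ring
        · rw [hmval, hcount]
          have h1abs : |(if b2 = true then (1:ℚ) else -1) * 2 ^ (Q i).k|
              = 2 ^ (Q i).k := by
            cases b2 <;> simp [abs_mul, abs_of_pos (two_zpow_pos ((Q i).k))]
          have habs : |(Q i).m + (if b2 = true then (1:ℚ) else -1) * 2 ^ (Q i).k - N|
              ≤ |(Q i).m - N| + 2 ^ (Q i).k := by
            rw [show (Q i).m + (if b2 = true then (1:ℚ) else -1) * 2 ^ (Q i).k - N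
                = ((Q i).m - N) + (if b2 = true then (1:ℚ) else -1) * 2 ^ (Q i).k
                from by ring]
            calc |((Q i).m - N) + (if b2 = true then (1:ℚ) else -1) * 2 ^ (Q i).k|
                ≤ |(Q i).m - N| + |(if b2 = true then (1:ℚ) else -1) * 2 ^ (Q i).k| :=
                  abs_add_le _ _
              _ = |(Q i).m - N| + 2 ^ (Q i).k := by rw [h1abs]
          calc |(Q i).m + (if b2 = true then (1:ℚ) else -1) * 2 ^ (Q i).k - N|
              ≤ |(Q i).m - N| + 2 ^ (Q i).k := habs
            _ ≤ ((δ.take i).countP pA : ℚ) * 2^UC + 2^UC := by linarith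
            _ = (((δ.take i).countP pA : ℚ) + 1) * 2 ^ UC := by ring
      · -- t-letter
        have hm' : ((Q i) * letterG (true, b2)).m = (Q i).m := by
          cases b2 <;> simp [letterG, tG]
        have hcount : ((δ.take i).countP pA : ℚ)
            ≤ (((δ.take i) ++ [((true : Bool), b2)]).countP pA : ℚ) := by
          rw [List.countP_append]
          push_cast
          simp [pA]
        refine ⟨z, by rw [hm', hz], ?_⟩
        rw [hm']
        have h2UC : (0:ℚ) < 2 ^ UC := by positivity
        calc |(Q i).m - N| ≤ ((δ.take i).countP pA : ℚ) * 2^UC := hd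
          _ ≤ (((δ.take i) ++ [((true : Bool), b2)]).countP pA : ℚ) * 2 ^ UC := by
              nlinarith
  -- main argument
  rw [show 2*n+2-8 = 2*n-6 from by omega]
  by_contra hcon
  push_neg at hcon
  -- there is an a-step at non-positive level
  have hbadex : ∃ j, j < L ∧ pA (δ.getD j dflt) = true ∧ (Q j).k ≤ 0 := by
    by_contra hno
    push_neg at hno
    have hH : ∀ j, j < L → pA (δ.getD j dflt) = true → 1 ≤ (Q j).k := by
      intro j h1 h2
      by_contra hk
      push_neg at hk
      have := hno j h1 h2
      omega
    obtain ⟨z, hz, _⟩ := hS L le_rfl hH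
    rw [hQL] at hz
    simp only at hz
    have h1 : (1:ℚ) = 2*z := by linarith
    have h2 : (1:ℤ) = 2*z := by exact_mod_cast h1
    omega
  classical
  obtain ⟨hiL, hiA, hik⟩ := Nat.find_spec hbadex
  set i := Nat.find hbadex with hidef
  have hH : ∀ j, j < i → pA (δ.getD j dflt) = true → 1 ≤ (Q j).k := by
    intro j hj hA
    have hmin := Nat.find_min hbadex hj
    by_contra hk
    push_neg at hk
    exact hmin ⟨by omega, hA, by omega⟩
  obtain ⟨z, hz, hdrift⟩ := hS i (by omega) hH
  rcases hx : δ.getD i dflt with ⟨b1, b2⟩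
  have hb1 : b1 = false := by
    rw [hx] at hiA
    cases b1
    · rfl
    · simp [pA] at hiA
  subst hb1
  have hstepi := hstep i hiL
  rw [hx] at hstepi
  have hmval : (Q (i+1)).m = (Q i).m + (if b2 = true then (1:ℚ) else -1) * 2 ^ (Q i).k := by
    rw [hstepi]
    cases b2 <;> simp [letterG, aG] <;> ring
  have hkval : (Q (i+1)).k = (Q i).k := by
    rw [hstepi]
    cases b2 <;> simp [letterG, aG]
  have h1abs : |(if b2 = true then (1:ℚ) else -1) * 2 ^ (Q i).k| = 2 ^ (Q i).k := by
    cases b2 <;> simp [abs_mul, abs_of_pos (two_zpow_pos ((Q i).k))]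
  have hle1 : (2:ℚ) ^ (Q i).k ≤ 1 := two_zpow_le_one hik
  have hpos : (0:ℚ) < 2 ^ (Q i).k := two_zpow_pos _
  -- m(i+1) is not twice an integer
  have hodd : ∀ w : ℤ, (Q (i+1)).m ≠ 2 * w := by
    intro w hw
    have hN2 : N = 2 * (2:ℚ)^n := by
      rw [hN, pow_succ]; ring
    have h1 : (if b2 = true then (1:ℚ) else -1) * 2 ^ (Q i).k
        = 2 * ((w - 2^n - z : ℤ) : ℚ) := by
      rw [hmval, hz] at hw
      push_cast
      push_cast at hw
      linarith [hw, hN2]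
    rcases eq_or_ne (w - 2^n - z) 0 with h0 | h0
    · rw [h0] at h1
      push_cast at h1
      rw [h1] at h1abs
      simp at h1abs
      linarith
    · have h2 : (1:ℚ) ≤ |((w - 2^n - z : ℤ) : ℚ)| := by
        rw [← Int.cast_abs]
        exact_mod_cast Int.one_le_abs h0
      rw [h1] at h1abs
      rw [abs_mul] at h1abs
      simp only [abs_two] at h1abs
      nlinarith
  -- ball constraint at i+1
  obtain ⟨v, hv, hvlen⟩ := hQball (i+1)
  have hlow := bound_low n (by omega) v hvlen
    (by rw [hv, hkval]; exact hik) (by rw [hv]; exact hodd)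
  rw [hv] at hlow
  -- μ i is small, so the drift is large
  have hmqi : (Q i).m ≤ 3 * 2^(n-1) + 2 := by
    have h1 : (Q i).m = (Q (i+1)).m - (if b2 = true then (1:ℚ) else -1) * 2 ^ (Q i).k := by
      rw [hmval]; ring
    have h2 : (Q (i+1)).m ≤ 3 * 2^(n-1) + 1 := le_of_abs_le hlow
    have h3 := neg_abs_le ((if b2 = true then (1:ℚ) else -1) * 2 ^ (Q i).k)
    rw [h1abs] at h3
    linarith
  have hN4 : N = 4 * 2^(n-1) := by
    rw [hN, show n+1 = (n-1)+2 by omega, pow_add]; ring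
  have hdriftlarge : ((2:ℚ))^(n-1) - 2 ≤ N - (Q i).m := by linarith
  have hNm : N - (Q i).m ≤ ((δ.take i).countP pA : ℚ) * 2^UC := by
    calc N - (Q i).m ≤ |N - (Q i).m| := le_abs_self _
      _ = |(Q i).m - N| := abs_sub_comm _ _
      _ ≤ _ := hdrift
  -- counting letters
  have hAb : (δ.take i).countP pA ≤ δ.countP pA := (List.take_sublist i δ).countP_le (p := pA)
  have hAble : (δ.take i).countP pA + 2*UC ≤ 2*n - 5 := by
    show (δ.take i).countP pA + 2 * δ.countP pUp ≤ 2*n - 5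
    have e1 : δ.countP pA + δ.countP pUp + δ.countP pDown = δ.length :=
      count_partition δ
    have e2 : (δ.countP pUp : ℤ) - δ.countP pDown = 1 := by
      have h1 := hκ L
      rw [hQL] at h1
      rw [hL, List.take_length] at h1
      simp only at h1
      omega
    have e4 : δ.length ≤ 2*n - 6 := by rw [← hL]; exact hcon
    omega
  have h3n : 3 ≤ n := by omega
  have hcast : ((δ.take i).countP pA : ℚ) ≤ (2*((n:ℚ)-3)+1) - 2*UC := by
    have h1 : ((δ.take i).countP pA : ℚ) + 2*UC ≤ 2*n - 5 := by
      have := hAble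
      have h2 : ((δ.take i).countP pA : ℚ) + 2*(UC:ℚ) ≤ ((2*n - 5 : ℕ) : ℚ) := by
        exact_mod_cast this
      have h3 : ((2*n - 5 : ℕ) : ℚ) = 2*(n:ℚ) - 5 := by
        push_cast [Nat.cast_sub (by omega : 5 ≤ 2*n)]
        ring
      linarith
    linarith
  have h2UC : (0:ℚ) < 2 ^ UC := by positivity
  have hq1 := Lq1 (n-3) UC (by omega)
  have hcast2 : ((2*(n-3)+1 : ℚ)) = 2*((n:ℚ)-3)+1 := by
    push_cast [Nat.cast_sub h3n]
    ring
  have h1 : ((δ.take i).countP pA : ℚ) * 2^UC ≤ (2*((n:ℚ)-3)+1 - 2*UC) * 2^UC := by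
    nlinarith
  have h2 : (2*((n:ℚ)-3)+1 - 2*UC) * 2^UC ≤ 3 * 2^(n-3-1) := by
    calc (2*((n:ℚ)-3)+1 - 2*UC) * 2^UC = ((2*((n-3):ℕ)+1 : ℚ) - 2*UC) * 2^UC := by
          rw [show ((2*((n-3):ℕ)+1 : ℚ)) = 2*((n:ℚ)-3)+1 from by
            push_cast [Nat.cast_sub h3n]; ring]
      _ ≤ 3 * 2^(n-3-1) := hq1
  have h4 : (2:ℚ)^(n-1) = 8 * 2^(n-4) := by
    rw [show n-1 = (n-4)+3 by omega, pow_add]; ring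
  have h5 : (1:ℚ) ≤ 2^(n-4) := one_le_pow₀ one_le_two
  have h6 : n-3-1 = n-4 := by omega
  rw [h6] at h2
  linarith

end PathArgument


/-- For every `n > 100` the elements `w = t^n a² t^(-n)` and
`u = a t^n a² t^(-(n-1))` of `BS(1,2)` lie on the sphere of radius `R = 2n+2`,
are at distance exactly 2, and every path between them inside the ball `B(R)`
has length greater than `R - 8`; consequently `BS(1,2)` does not satisfy
Poénaru's condition `P(2)` with respect to `{a,a⁻¹,t,t⁻¹}`. -/
theorem bs12_not_P2 :
    (∀ n : ℕ, 100 < n →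
      OnSphere 2 ((bsT 2) ^ n * (bsA 2) ^ 2 * ((bsT 2)⁻¹) ^ n) (2 * n + 2) ∧
      OnSphere 2 (bsA 2 * (bsT 2) ^ n * (bsA 2) ^ 2 * ((bsT 2)⁻¹) ^ (n - 1))
        (2 * n + 2) ∧
      (∃ γ : List (Bool × Bool), γ.length ≤ 2 ∧
        ((bsT 2) ^ n * (bsA 2) ^ 2 * ((bsT 2)⁻¹) ^ n) * evalWord 2 γ
          = bsA 2 * (bsT 2) ^ n * (bsA 2) ^ 2 * ((bsT 2)⁻¹) ^ (n - 1)) ∧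
      (¬ ∃ γ : List (Bool × Bool), γ.length ≤ 1 ∧
        ((bsT 2) ^ n * (bsA 2) ^ 2 * ((bsT 2)⁻¹) ^ n) * evalWord 2 γ
          = bsA 2 * (bsT 2) ^ n * (bsA 2) ^ 2 * ((bsT 2)⁻¹) ^ (n - 1)) ∧
      (∀ δ : List (Bool × Bool),
        IsPathInBall 2 ((bsT 2) ^ n * (bsA 2) ^ 2 * ((bsT 2)⁻¹) ^ n)
          (bsA 2 * (bsT 2) ^ n * (bsA 2) ^ 2 * ((bsT 2)⁻¹) ^ (n - 1))
          (2 * n + 2) δ →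
        2 * n + 2 - 8 < δ.length)) ∧
    ¬ PropertyP2 2 := by
  have main : ∀ n : ℕ, 100 < n →
      OnSphere 2 ((bsT 2) ^ n * (bsA 2) ^ 2 * ((bsT 2)⁻¹) ^ n) (2 * n + 2) ∧
      OnSphere 2 (bsA 2 * (bsT 2) ^ n * (bsA 2) ^ 2 * ((bsT 2)⁻¹) ^ (n - 1))
        (2 * n + 2) ∧
      (∃ γ : List (Bool × Bool), γ.length ≤ 2 ∧
        ((bsT 2) ^ n * (bsA 2) ^ 2 * ((bsT 2)⁻¹) ^ n) * evalWord 2 γ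
          = bsA 2 * (bsT 2) ^ n * (bsA 2) ^ 2 * ((bsT 2)⁻¹) ^ (n - 1)) ∧
      (¬ ∃ γ : List (Bool × Bool), γ.length ≤ 1 ∧
        ((bsT 2) ^ n * (bsA 2) ^ 2 * ((bsT 2)⁻¹) ^ n) * evalWord 2 γ
          = bsA 2 * (bsT 2) ^ n * (bsA 2) ^ 2 * ((bsT 2)⁻¹) ^ (n - 1)) ∧
      (∀ δ : List (Bool × Bool),
        IsPathInBall 2 ((bsT 2) ^ n * (bsA 2) ^ 2 * ((bsT 2)⁻¹) ^ n)
          (bsA 2 * (bsT 2) ^ n * (bsA 2) ^ 2 * ((bsT 2)⁻¹) ^ (n - 1))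
          (2 * n + 2) δ →
        2 * n + 2 - 8 < δ.length) := by
    intro n hn
    have hn1 : 1 ≤ n := by omega
    refine ⟨⟨inBall_w n, ?_⟩, ⟨inBall_u n hn1, ?_⟩, ?_, ?_, ?_⟩
    · have := not_inBall_w n hn1
      rwa [show 2*n+1 = 2*n+2-1 from by omega] at this
    · have := not_inBall_u n hn1
      rwa [show 2*n+1 = 2*n+2-1 from by omega] at this
    · refine ⟨[(false,true),(true,true)], by simp, ?_⟩
      have hγ : evalWord 2 [(false,true),(true,true)] = bsA 2 * bsT 2 := by
        rw [evalWord_cons, evalWord_A, evalWord_T]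
      rw [hγ, gamma_eq n hn1]
    · exact no_short n hn1
    · exact fun δ h => path_long n hn δ h
  refine ⟨main, ?_⟩
  rintro ⟨f, hf, r₀, hP⟩
  have h1 : ∀ᶠ r : ℕ in Filter.atTop, (9:ℝ) ≤ (r:ℝ) - 1 * f r :=
    (hf 1 one_pos).eventually_ge_atTop 9
  obtain ⟨M, hM⟩ := Filter.eventually_atTop.1 h1
  set n := 101 + r₀ + M with hndef
  have hn : 100 < n := by omega
  obtain ⟨hsw, hsu, hγ, _, hpath⟩ := main n hn
  obtain ⟨δ, hδpath, hδlen⟩ := hP (2*n+2) (by omega) _ _ hsw hsu hγ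
  have hlong := hpath δ hδpath
  have h9 := hM (2*n+2) (by omega)
  have hlen2 : (2*n - 5 : ℕ) ≤ δ.length := by omega
  have hlen3 : ((2*n - 5 : ℕ) : ℝ) ≤ (δ.length : ℝ) := by exact_mod_cast hlen2
  have hcast : ((2*n - 5 : ℕ) : ℝ) = 2*(n:ℝ) - 5 := by
    push_cast [Nat.cast_sub (by omega : 5 ≤ 2*n)]
    ring
  have hr : ((2*n+2 : ℕ) : ℝ) = 2*(n:ℝ) + 2 := by push_cast; ring
  rw [hr] at h9
  rw [hcast] at hlen3
  linarith
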